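/- arXiv:1308.3651 — 7 statements merged into one kernel-verified Lean document; each statement's English description precedes it below -/
import Mathlib

section
/- Let I be a prime ideal of the Gaussian integers ℤ[i] such that the quotient ring ℤ[i]/I has characteristic different from 2. Then the kernel Γ₀(I) of the group homomorphism PSL₂(ℤ[i]) → PSL₂(ℤ[i]/I) induced by the quotient ring homomorphism ℤ[i] → ℤ[i]/I is a torsion-free group. -/
open Matrix MatrixGroups


lemma gauss_sq_not_dvd {π : GaussianInt} (hπ : Prime π) {q : ℕ} (hq : q.Prime)
    (hq2 : q ≠ 2) : ¬ ((π ^ 2 : GaussianInt) ∣ (q : GaussianInt)) := by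
  intro hdvd
  obtain ⟨c, hc⟩ := hdvd
  have hnorm : (q : ℤ) * q = π.norm * π.norm * c.norm := by
    have := congrArg Zsqrtd.norm hc
    rw [Zsqrtd.norm_natCast, pow_two, Zsqrtd.norm_mul, Zsqrtd.norm_mul] at this
    linarith
  have hnn : 0 ≤ π.norm := Zsqrtd.norm_nonneg (by norm_num) π
  have hd1 : π.norm ∣ (q : ℤ) := by
    have h2 : π.norm ^ 2 ∣ (q : ℤ) ^ 2 := ⟨c.norm, by ring_nf; linarith [hnorm]⟩
    exact (Int.pow_dvd_pow_iff two_ne_zero).mp h2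
  have hne1 : π.norm.natAbs ≠ 1 := fun h => hπ.not_unit (Zsqrtd.norm_eq_one_iff.mp h)
  have hnq : π.norm = q := by
    have hd1' : π.norm.natAbs ∣ q := by
      have := Int.natAbs_dvd_natAbs.mpr hd1
      simpa using this
    rcases (Nat.Prime.eq_one_or_self_of_dvd hq _ hd1') with h | h
    · exact absurd h hne1
    · rw [← Int.natAbs_of_nonneg hnn, h]
  have hcnorm : c.norm = 1 := by
    have hqne : (q : ℤ) * q ≠ 0 := by
      have := hq.pos; positivity
    have : (q:ℤ) * q * c.norm = (q:ℤ) * q * 1 := by rw [← hnq] at hnorm ⊢; linarith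
    exact mul_left_cancel₀ hqne this
  -- star π = π * c
  have hstar : star π = π * c := by
    have h1 : (π.norm : GaussianInt) = π * star π := Zsqrtd.norm_eq_mul_conj π
    rw [hnq] at h1
    have h2 : π * star π = π * (π * c) := by
      rw [← h1]
      push_cast
      rw [hc, pow_two, mul_assoc]
    exact mul_left_cancel₀ hπ.ne_zero h2
  have hq' : (q : ℤ) = π.re * π.re + π.im * π.im := by
    rw [← hnq, Zsqrtd.norm_def]; ring
  have hc' : c.re * c.re + c.im * c.im = 1 := by
    have := hcnorm
    rw [Zsqrtd.norm_def] at this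
    linarith
  have hsq : ∀ a : ℤ, (q : ℤ) ≠ a * a := by
    intro a ha
    have hna : q = a.natAbs * a.natAbs := by
      have h := Int.natAbs_mul_self (a := a)
      rw [← h] at ha; exact_mod_cast ha
    rcases hq.eq_one_or_self_of_dvd a.natAbs ⟨a.natAbs, hna⟩ with h | h
    · rw [h] at hna; simp at hna; exact hq.one_lt.ne' hna
    · rw [h] at hna; nlinarith [hq.two_le]
  have h2dvd : ∀ b : ℤ, (q : ℤ) = 2 * (b * b) → False := by
    intro b hb
    have h1 : (2 : ℤ) ∣ (q : ℤ) := ⟨b * b, hb⟩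
    have h2 : (2 : ℕ) ∣ q := by exact_mod_cast h1
    exact hq2 ((Nat.prime_dvd_prime_iff_eq Nat.prime_two hq).mp h2).symm
  have e1 : π.re = π.re * c.re + -1 * π.im * c.im := by
    have := congrArg Zsqrtd.re hstar
    simpa [Zsqrtd.re_mul] using this
  have e2 : -π.im = π.re * c.im + π.im * c.re := by
    have := congrArg Zsqrtd.im hstar
    simpa [Zsqrtd.im_mul] using this
  have hcases : (c.re = 1 ∧ c.im = 0) ∨ (c.re = -1 ∧ c.im = 0) ∨
      (c.re = 0 ∧ c.im = 1) ∨ (c.re = 0 ∧ c.im = -1) := by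
    by_cases h : c.re = 0
    · rw [h] at hc'
      simp only [mul_zero, zero_mul, zero_add] at hc'
      rcases mul_self_eq_one_iff.mp hc' with h' | h'
      · exact Or.inr (Or.inr (Or.inl ⟨h, h'⟩))
      · exact Or.inr (Or.inr (Or.inr ⟨h, h'⟩))
    · have hre1 : 1 ≤ c.re * c.re := by
        nlinarith [Int.one_le_abs (show c.re ≠ 0 from h), abs_mul_abs_self c.re,
          abs_nonneg c.re]
      have him : c.im = 0 := by
        by_contra him
        have : 1 ≤ c.im * c.im := by
          nlinarith [Int.one_le_abs him, abs_mul_abs_self c.im, abs_nonneg c.im]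
        linarith
      rw [him] at hc'
      simp only [mul_zero, add_zero] at hc'
      rcases mul_self_eq_one_iff.mp hc' with h' | h'
      · exact Or.inl ⟨h', him⟩
      · exact Or.inr (Or.inl ⟨h', him⟩)
  rcases hcases with ⟨h1, h2⟩ | ⟨h1, h2⟩ | ⟨h1, h2⟩ | ⟨h1, h2⟩
  · rw [h1, h2] at e1 e2
    have : π.im = 0 := by linarith
    rw [this] at hq'
    exact hsq π.re (by linarith)
  · rw [h1, h2] at e1 e2
    have : π.re = 0 := by linarith
    rw [this] at hq'
    exact hsq π.im (by linarith)
  · rw [h1, h2] at e1 e2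
    have hre : π.re = -π.im := by linarith
    rw [hre] at hq'
    exact h2dvd π.im (by linarith)
  · rw [h1, h2] at e1 e2
    have hre : π.im = π.re := by linarith
    rw [hre] at hq'
    exact h2dvd π.re (by linarith)

lemma gamma_no_prime_order (I : Ideal GaussianInt) (hI : I.IsPrime)
    (hchar : ringChar (GaussianInt ⧸ I) ≠ 2)
    (B : Matrix.SpecialLinearGroup (Fin 2) GaussianInt)
    (hB : Matrix.SpecialLinearGroup.map (Ideal.Quotient.mk I) B = 1)
    {q : ℕ} (hq : q.Prime) (hBq : B ^ q = 1) : B = 1 := by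
  classical
  set M : Matrix (Fin 2) (Fin 2) GaussianInt :=
    (B : Matrix (Fin 2) (Fin 2) GaussianInt) - 1 with hMdef
  have hM : ∀ i j, M i j ∈ I := by
    intro i j
    have h1 : Ideal.Quotient.mk I ((B : Matrix (Fin 2) (Fin 2) GaussianInt) i j)
        = (1 : Matrix (Fin 2) (Fin 2) (GaussianInt ⧸ I)) i j := by
      have h := congrArg
        (fun X : Matrix.SpecialLinearGroup (Fin 2) (GaussianInt ⧸ I) =>
          (X : Matrix (Fin 2) (Fin 2) (GaussianInt ⧸ I)) i j) hB
      exact h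
    have h2 : Ideal.Quotient.mk I ((B : Matrix (Fin 2) (Fin 2) GaussianInt) i j)
        = Ideal.Quotient.mk I ((1 : Matrix (Fin 2) (Fin 2) GaussianInt) i j) := by
      rw [h1]
      by_cases h : i = j <;> simp [Matrix.one_apply, h]
    simpa [hMdef, Matrix.sub_apply] using Ideal.Quotient.eq.mp h2
  rcases eq_or_ne M 0 with hM0 | hM0
  · have : (B : Matrix (Fin 2) (Fin 2) GaussianInt) = 1 := by
      have := sub_eq_zero.mp hM0
      exact this
    exact Subtype.ext this
  exfalso
  by_cases hbot : I = ⊥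
  · apply hM0
    refine Matrix.ext fun i j => ?_
    have := hM i j
    rw [hbot] at this
    simpa using this
  obtain ⟨π, hspan⟩ := (IsPrincipalIdealRing.principal I).principal
  have hπ0 : π ≠ 0 := by
    rintro rfl
    apply hbot
    rw [hspan]
    simp
  have hπ : Prime π := by
    have hI' : Ideal.IsPrime (Ideal.span {π}) := by rw [Ideal.span]; exact hspan ▸ hI
    exact (Ideal.span_singleton_prime hπ0).mp hI'
  have hMdvd : ∀ i j, π ∣ M i j := fun i j => by
    have h := hM i j
    rw [hspan] at h
    exact Ideal.mem_span_singleton.mp h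
  have hexn : ∃ n, ¬ ∀ i j, π ^ n ∣ M i j := by
    obtain ⟨i, j, hij⟩ : ∃ i j, M i j ≠ 0 := by
      by_contra h
      push_neg at h
      exact hM0 (Matrix.ext fun i j => h i j)
    obtain ⟨n, hn⟩ := FiniteMultiplicity.of_prime_left hπ hij
    exact ⟨n + 1, fun h => hn (h i j)⟩
  set K := Nat.find hexn with hKdef
  have hKspec : ¬ ∀ i j, π ^ K ∣ M i j := Nat.find_spec hexn
  have hK2 : 2 ≤ K := by
    have h0 : K ≠ 0 := by
      intro h
      apply hKspec
      rw [h]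
      intro i j
      simpa using one_dvd _
    have h1' : K ≠ 1 := by
      intro h
      apply hKspec
      rw [h]
      intro i j
      simpa using hMdvd i j
    omega
  set k := K - 1 with hkdef
  have hk1 : 1 ≤ k := by omega
  have hPk : ∀ i j, π ^ k ∣ M i j := by
    have h := Nat.find_min hexn (show k < K by omega)
    exact not_not.mp h
  obtain ⟨i₀, j₀, hnd⟩ : ∃ i j, ¬ π ^ (k + 1) ∣ M i j := by
    have h : ¬ ∀ i j, π ^ (k + 1) ∣ M i j := by
      rw [show k + 1 = K by omega]
      exact hKspec
    push_neg at h
    exact h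
  choose N hN using hPk
  have hMN : M = (π ^ k) • Matrix.of N := by
    refine Matrix.ext fun i j => ?_
    simp [hN i j]
  have hNi : ¬ π ∣ N i₀ j₀ := by
    intro h
    apply hnd
    rw [hN i₀ j₀, pow_succ]
    exact mul_dvd_mul_left _ h
  have hpow : ∀ t : ℕ, ∀ i j, π ^ (k * t) ∣ (M ^ t) i j := by
    intro t i j
    rw [hMN, smul_pow]
    rw [Matrix.smul_apply, smul_eq_mul, ← pow_mul]
    exact dvd_mul_right _ _
  obtain ⟨r, hqr⟩ : ∃ r, q = r + 2 := ⟨q - 2, by have := hq.two_le; omega⟩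
  have hmat : (B : Matrix (Fin 2) (Fin 2) GaussianInt) ^ q = 1 := by
    rw [← Matrix.SpecialLinearGroup.coe_pow, hBq, Matrix.SpecialLinearGroup.coe_one]
  have hBM : (B : Matrix (Fin 2) (Fin 2) GaussianInt) = M + 1 := by
    rw [hMdef, sub_add_cancel]
  have hcast : ∀ (A : Matrix (Fin 2) (Fin 2) GaussianInt) (c : ℕ),
      A * (c : Matrix (Fin 2) (Fin 2) GaussianInt) = c • A := by
    intro A c
    rw [show ((c : ℕ) : Matrix (Fin 2) (Fin 2) GaussianInt) = c • (1 : Matrix (Fin 2) (Fin 2) GaussianInt) from by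
      rw [nsmul_eq_mul, mul_one], mul_smul_comm, mul_one]
  have hbinom : ∑ m ∈ Finset.range (q + 1),
      (q.choose m) • M ^ m = (1 : Matrix (Fin 2) (Fin 2) GaussianInt) := by
    have h := (Commute.one_right M).add_pow q
    simp only [one_pow, mul_one, hcast] at h
    rw [← h, ← hBM, hmat]
  have hsum0 : ∑ m ∈ Finset.range q, (q.choose (m + 1)) • M ^ (m + 1)
      = (0 : Matrix (Fin 2) (Fin 2) GaussianInt) := by
    have h := Finset.sum_range_succ' (fun m => (q.choose m) • M ^ m) q
    rw [hbinom] at h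
    simp only [pow_zero, Nat.choose_zero_right, one_smul] at h
    exact by
      have := h
      -- h : 1 = ∑_{range q} f (m+1) + 1
      linear_combination (norm := abel) -this
  have hentry : ∀ i j, ∑ m ∈ Finset.range q,
      (q.choose (m + 1) : GaussianInt) * (M ^ (m + 1)) i j = 0 := by
    intro i j
    have h := congrFun (congrFun hsum0 i) j
    simp only [Matrix.sum_apply] at h
    simp only [Matrix.smul_apply, nsmul_eq_mul] at h
    simpa using h
  have hsplit : (q : GaussianInt) * (M ^ 1) i₀ j₀
      = - ∑ m ∈ Finset.range (r + 1), (q.choose (m + 2) : GaussianInt) * (M ^ (m + 2)) i₀ j₀ := by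
    have h := hentry i₀ j₀
    rw [hqr] at h
    rw [Finset.sum_range_succ'] at h
    simp only [Nat.choose_one_right, zero_add] at h
    rw [← hqr] at h
    -- h : ∑ m ∈ range (r+1), choose q (m+2) * (M^(m+2)) i₀ j₀ + q * (M^1) i₀ j₀ = 0
    linear_combination h
  have hq1N : (q : GaussianInt) * (M ^ 1) i₀ j₀
      = π ^ k * ((q : GaussianInt) * N i₀ j₀) := by
    rw [pow_one, hN i₀ j₀]; ring
  have hdvd1 : π ^ (k + 1) ∣ (q : GaussianInt) * (M ^ 1) i₀ j₀ := by
    rw [hsplit, dvd_neg]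
    apply Finset.dvd_sum
    intro m _
    apply Dvd.dvd.mul_left
    refine dvd_trans (pow_dvd_pow π ?_) (hpow (m + 2) i₀ j₀)
    have h2 : k * 2 ≤ k * (m + 2) := Nat.mul_le_mul_left k (by omega)
    omega
  have hπq : π ∣ (q : GaussianInt) := by
    rw [hq1N, pow_succ] at hdvd1
    have h2 : π ∣ (q : GaussianInt) * N i₀ j₀ :=
      (mul_dvd_mul_iff_left (pow_ne_zero k hπ0)).mp hdvd1
    exact (hπ.dvd_mul.mp h2).resolve_right hNi
  have hqI : (q : GaussianInt) ∈ I := by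
    rw [hspan]
    exact Ideal.mem_span_singleton.mpr hπq
  have hq0 : ((q : ℕ) : GaussianInt ⧸ I) = 0 := by
    rw [← map_natCast (Ideal.Quotient.mk I)]
    exact Ideal.Quotient.eq_zero_iff_mem.mpr hqI
  haveI : Nontrivial (GaussianInt ⧸ I) := Ideal.Quotient.nontrivial_iff.mpr hI.ne_top
  have hchardvd : ringChar (GaussianInt ⧸ I) ∣ q := ringChar.dvd hq0
  have hring : ringChar (GaussianInt ⧸ I) = q := by
    rcases hq.eq_one_or_self_of_dvd _ hchardvd with h | h
    · exact absurd h CharP.ringChar_ne_one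
    · exact h
  have hqne2 : q ≠ 2 := fun h => hchar (by rw [hring, h])
  have hsq2 : ¬ π ^ 2 ∣ (q : GaussianInt) := gauss_sq_not_dvd hπ hq hqne2
  have hr1 : 1 ≤ r := by omega
  have hdvd2 : π ^ (k + 2) ∣ (q : GaussianInt) * (M ^ 1) i₀ j₀ := by
    rw [hsplit, dvd_neg]
    apply Finset.dvd_sum
    intro m hm
    rcases eq_or_ne m r with rfl | hmr
    · apply Dvd.dvd.mul_left
      refine dvd_trans (pow_dvd_pow π ?_) (hpow (m + 2) i₀ j₀)
      have h2 : k * 3 ≤ k * (m + 2) := Nat.mul_le_mul_left k (by omega)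
      omega
    · have hmlt : m + 2 < q := by
        have : m < r + 1 := Finset.mem_range.mp hm
        omega
      have hqc : q ∣ q.choose (m + 2) := hq.dvd_choose_self (by omega) hmlt
      have hπc : π ∣ (q.choose (m + 2) : GaussianInt) :=
        dvd_trans hπq (Nat.cast_dvd_cast hqc)
      have hπm : π ^ (k + 1) ∣ (M ^ (m + 2)) i₀ j₀ := by
        refine dvd_trans (pow_dvd_pow π ?_) (hpow (m + 2) i₀ j₀)
        have h2 : k * 2 ≤ k * (m + 2) := Nat.mul_le_mul_left k (by omega)
        omega
      calc π ^ (k + 2) = π * π ^ (k + 1) := by ring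
        _ ∣ (q.choose (m + 2) : GaussianInt) * (M ^ (m + 2)) i₀ j₀ :=
          mul_dvd_mul hπc hπm
  have hfin : π ^ 2 ∣ (q : GaussianInt) * N i₀ j₀ := by
    rw [hq1N] at hdvd2
    refine (mul_dvd_mul_iff_left (pow_ne_zero k hπ0)).mp ?_
    rw [← pow_add]
    exact hdvd2
  exact hsq2 (hπ.pow_dvd_of_dvd_mul_right 2 hNi hfin)

/-- The homomorphism `PSL₂(R) → PSL₂(S)` induced entrywise by a ring homomorphism
`f : R →+* S`: the entrywise map `SL₂(R) → SL₂(S)` sends the center into the center,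
hence descends to the quotients. -/
def pslMap {R S : Type*} [CommRing R] [CommRing S] (f : R →+* S) :
    Matrix.ProjectiveSpecialLinearGroup (Fin 2) R →*
      Matrix.ProjectiveSpecialLinearGroup (Fin 2) S :=
  QuotientGroup.map _ _ (Matrix.SpecialLinearGroup.map f) (by
    intro A hA
    rw [Subgroup.mem_comap]
    obtain ⟨r, hr, hrA⟩ := Matrix.SpecialLinearGroup.mem_center_iff.mp hA
    refine Matrix.SpecialLinearGroup.mem_center_iff.mpr ⟨f r, ?_, ?_⟩
    · rw [← map_pow f, hr, f.map_one]
    · have : ((Matrix.SpecialLinearGroup.map f) A : Matrix (Fin 2) (Fin 2) S)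
        = (A : Matrix (Fin 2) (Fin 2) R).map f := rfl
      rw [this, ← hrA]
      ext i j
      by_cases h : i = j <;>
        simp [Matrix.scalar, Matrix.map_apply, Matrix.one_apply, h])

/-- `Monoid.IsTorsionFree G` (removed from Mathlib): no nontrivial element has finite order. -/
def Monoid.IsTorsionFree (G : Type*) [Monoid G] : Prop :=
  ∀ g : G, g ≠ 1 → ¬IsOfFinOrder g

/-- If `I` is a prime ideal of the Gaussian integers `ℤ[i]` such that the quotient ring
`ℤ[i]/I` has characteristic different from `2`, then the kernel `Γ₀(I)` of the induced
homomorphism `PSL₂(ℤ[i]) → PSL₂(ℤ[i]/I)` is a torsion-free group. -/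
theorem gamma0_isTorsionFree (I : Ideal GaussianInt) (hI : I.IsPrime)
    (hchar : ringChar (GaussianInt ⧸ I) ≠ 2) :
    Monoid.IsTorsionFree (pslMap (Ideal.Quotient.mk I)).ker := by
  classical
  haveI := hI
  intro g hg hfin
  apply hg
  obtain ⟨A, hA⟩ := QuotientGroup.mk_surjective
    (g : Matrix.ProjectiveSpecialLinearGroup (Fin 2) GaussianInt)
  have hker : pslMap (Ideal.Quotient.mk I)
      (g : Matrix.ProjectiveSpecialLinearGroup (Fin 2) GaussianInt) = 1 := g.2
  rw [← hA] at hker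
  have hcen : Matrix.SpecialLinearGroup.map (Ideal.Quotient.mk I) A
      ∈ Subgroup.center (Matrix.SpecialLinearGroup (Fin 2) (GaussianInt ⧸ I)) := by
    rw [pslMap, QuotientGroup.map_mk] at hker
    exact (QuotientGroup.eq_one_iff _).mp hker
  obtain ⟨ε, hε2, hεA⟩ := Matrix.SpecialLinearGroup.mem_center_iff.mp hcen
  have hε : ε = 1 ∨ ε = -1 := by
    apply mul_self_eq_one_iff.mp
    rw [← pow_two]
    simpa using hε2
  suffices h : ∃ B : Matrix.SpecialLinearGroup (Fin 2) GaussianInt,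
      Matrix.SpecialLinearGroup.map (Ideal.Quotient.mk I) B = 1 ∧
      (QuotientGroup.mk B : Matrix.ProjectiveSpecialLinearGroup (Fin 2) GaussianInt)
        = (g : Matrix.ProjectiveSpecialLinearGroup (Fin 2) GaussianInt) by
    obtain ⟨B, hBmap, hBmk⟩ := h
    have hfinB : IsOfFinOrder
        (QuotientGroup.mk B : Matrix.ProjectiveSpecialLinearGroup (Fin 2) GaussianInt) := by
      rw [hBmk]
      exact ((pslMap (Ideal.Quotient.mk I)).ker.subtype).isOfFinOrder hfin
    obtain ⟨n, hn, hpow⟩ := isOfFinOrder_iff_pow_eq_one.mp hfinB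
    have hcenB : B ^ n ∈ Subgroup.center (Matrix.SpecialLinearGroup (Fin 2) GaussianInt) := by
      rw [← QuotientGroup.eq_one_iff, QuotientGroup.mk_pow]
      exact hpow
    obtain ⟨s, hs2, hsB⟩ := Matrix.SpecialLinearGroup.mem_center_iff.mp hcenB
    have hs : s = 1 ∨ s = -1 := by
      apply mul_self_eq_one_iff.mp
      rw [← pow_two]
      simpa using hs2
    have hfinSL : ∃ m, 0 < m ∧ B ^ m = 1 := by
      rcases hs with rfl | rfl
      · refine ⟨n, hn, ?_⟩
        apply Subtype.ext
        rw [← hsB]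
        simp
      · refine ⟨2 * n, by omega, ?_⟩
        apply Subtype.ext
        rw [show 2 * n = n * 2 by ring, pow_mul, Matrix.SpecialLinearGroup.coe_pow, ← hsB,
          ← map_pow, neg_one_sq, _root_.map_one]
        rfl
    obtain ⟨m, hm, hBm⟩ := hfinSL
    have hford : IsOfFinOrder B := isOfFinOrder_iff_pow_eq_one.mpr ⟨m, hm, hBm⟩
    have hd1 : orderOf B = 1 := by
      by_contra hd
      obtain ⟨p, hp, hpd⟩ := Nat.exists_prime_and_dvd hd
      have hdpos : 0 < orderOf B := hford.orderOf_pos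
      have hCmap : Matrix.SpecialLinearGroup.map (Ideal.Quotient.mk I)
          (B ^ (orderOf B / p)) = 1 := by
        rw [map_pow, hBmap, one_pow]
      have hCq : (B ^ (orderOf B / p)) ^ p = 1 := by
        rw [← pow_mul, Nat.div_mul_cancel hpd, pow_orderOf_eq_one]
      have hC1 : B ^ (orderOf B / p) = 1 :=
        gamma_no_prime_order I hI hchar _ hCmap hp hCq
      have hdvd : orderOf B ∣ orderOf B / p := orderOf_dvd_of_pow_eq_one hC1
      have hqpos : 0 < orderOf B / p := Nat.div_pos (Nat.le_of_dvd hdpos hpd) hp.pos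
      have hlt : orderOf B / p < orderOf B := Nat.div_lt_self hdpos hp.one_lt
      exact absurd (Nat.le_of_dvd hqpos hdvd) (by omega)
    have hB1 : B = 1 := orderOf_eq_one_iff.mp hd1
    apply Subtype.ext
    rw [← hBmk, hB1, QuotientGroup.mk_one]
    rfl
  -- construct B
  have hSdet : (-1 : Matrix (Fin 2) (Fin 2) GaussianInt).det = 1 := by
    simp [show (-1 : Matrix (Fin 2) (Fin 2) GaussianInt) = -(1) from rfl, Matrix.det_neg]
  set S : Matrix.SpecialLinearGroup (Fin 2) GaussianInt := ⟨-1, hSdet⟩ with hSdef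
  rcases hε with rfl | rfl
  · refine ⟨A, ?_, hA⟩
    apply Subtype.ext
    rw [← hεA]
    simp
  · refine ⟨S * A, ?_, ?_⟩
    · apply Subtype.ext
      have hSA : ((Matrix.SpecialLinearGroup.map (Ideal.Quotient.mk I) (S * A)) :
            Matrix (Fin 2) (Fin 2) (GaussianInt ⧸ I))
          = ((-1 : Matrix (Fin 2) (Fin 2) GaussianInt).map (Ideal.Quotient.mk I)) *
            ((Matrix.SpecialLinearGroup.map (Ideal.Quotient.mk I) A) :
              Matrix (Fin 2) (Fin 2) (GaussianInt ⧸ I)) := rfl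
      rw [hSA, ← hεA]
      have hmapneg : ((-1 : Matrix (Fin 2) (Fin 2) GaussianInt).map (Ideal.Quotient.mk I))
          = -1 := by
        ext i j
        by_cases h : i = j <;> simp [Matrix.map_apply, Matrix.one_apply, h]
      rw [hmapneg]
      have h2 : (scalar (Fin 2)) (-1 : GaussianInt ⧸ I) = -(1 : Matrix (Fin 2) (Fin 2) (GaussianInt ⧸ I)) := by
        rw [Matrix.scalar_apply]
        ext i j
        by_cases h : i = j <;> simp [Matrix.diagonal_apply, Matrix.one_apply, h]
      rw [h2, neg_mul_neg, one_mul]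
      rfl
    · rw [QuotientGroup.mk_mul, hA]
      have hScen : (QuotientGroup.mk S :
            Matrix.ProjectiveSpecialLinearGroup (Fin 2) GaussianInt) = 1 := by
        rw [QuotientGroup.eq_one_iff]
        refine Matrix.SpecialLinearGroup.mem_center_iff.mpr ⟨-1, by norm_num, ?_⟩
        show (scalar (Fin 2)) (-1 : GaussianInt) = (-1 : Matrix (Fin 2) (Fin 2) GaussianInt)
        rw [Matrix.scalar_apply]
        refine Matrix.ext fun i j => ?_
        by_cases h : i = j <;> simp [Matrix.diagonal_apply, Matrix.one_apply, h]
      rw [hScen, one_mul]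
end

section
/- Let I be a prime ideal of the Gaussian integers ℤ[i] such that the quotient ring ℤ[i]/I has characteristic different from 2. If A ∈ SL₂(ℤ[i]) has finite order and every entry of A − 1 (where 1 is the identity matrix) lies in I, then A = 1. -/
open Matrix MatrixGroups

private lemma aux_dvd_pow_entries (d : GaussianInt) (M : Matrix (Fin 2) (Fin 2) GaussianInt)
    (h : ∀ i j, d ∣ M i j) : ∀ m : ℕ, ∀ i j, d ^ (m + 1) ∣ (M ^ (m + 1)) i j := by
  intro m
  induction m with
  | zero => intro i j; simpa using h i j
  | succ m ih =>
    intro i j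
    have hmm : (M ^ (m + 1 + 1)) i j = ∑ l, (M ^ (m + 1)) i l * M l j := by
      rw [pow_succ, Matrix.mul_apply]
    rw [hmm, pow_succ]
    exact Finset.dvd_sum fun l _ => mul_dvd_mul (ih i l) (h l j)


private lemma aux_zero_of_forall_pow_dvd (π : GaussianInt) (hπ : Prime π) (x : GaussianInt)
    (h : ∀ k : ℕ, π ^ k ∣ x) : x = 0 := by
  by_contra hx
  have hN0 : 0 < (Zsqrtd.norm x).natAbs := by
    rw [Int.natAbs_pos]
    simpa [GaussianInt.norm_eq_zero] using hx
  have hn2 : 2 ≤ (Zsqrtd.norm π).natAbs := by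
    rcases Nat.lt_or_ge (Zsqrtd.norm π).natAbs 2 with hlt | hge
    · interval_cases hv : (Zsqrtd.norm π).natAbs
      · exact absurd (by rwa [← GaussianInt.norm_eq_zero, ← Int.natAbs_eq_zero]) hπ.ne_zero
      · exact absurd (Zsqrtd.norm_eq_one_iff.mp hv) hπ.not_unit
    · exact hge
  have key : ∀ k : ℕ, (Zsqrtd.norm π).natAbs ^ k ∣ (Zsqrtd.norm x).natAbs := by
    intro k
    obtain ⟨c, hc⟩ := h k
    have hp : Zsqrtd.norm (π ^ k) = Zsqrtd.norm π ^ k := map_pow Zsqrtd.normMonoidHom π k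
    have hxx : Zsqrtd.norm x = Zsqrtd.norm π ^ k * Zsqrtd.norm c := by
      rw [hc, Zsqrtd.norm_mul, hp]
    rw [hxx, Int.natAbs_mul, Int.natAbs_pow]
    exact Dvd.intro _ rfl
  have h1 := Nat.le_of_dvd hN0 (key (Zsqrtd.norm x).natAbs)
  have h2 : (Zsqrtd.norm x).natAbs < 2 ^ (Zsqrtd.norm x).natAbs := Nat.lt_two_pow_self
  have h3 : 2 ^ (Zsqrtd.norm x).natAbs ≤ (Zsqrtd.norm π).natAbs ^ (Zsqrtd.norm x).natAbs :=
    Nat.pow_le_pow_left hn2 _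
  omega


private lemma aux_not_sq_dvd (π : GaussianInt) (hπ : Prime π) (q : ℕ) (hq : q.Prime)
    (hq2 : q ≠ 2) : ¬ π ^ 2 ∣ (q : GaussianInt) := by
  intro hdvd
  have hcast : ((q : ℤ) : GaussianInt) = (q : GaussianInt) := by push_cast; ring
  -- norm of π is q
  have hnq : (Zsqrtd.norm π).natAbs = q := by
    obtain ⟨c, hc⟩ := hdvd
    have hp : Zsqrtd.norm (π ^ 2) = Zsqrtd.norm π ^ 2 := map_pow Zsqrtd.normMonoidHom π 2
    have hxx : Zsqrtd.norm (q : GaussianInt) = Zsqrtd.norm π ^ 2 * Zsqrtd.norm c := by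
      rw [hc, Zsqrtd.norm_mul, hp]
    have hnorm_q : Zsqrtd.norm ((q : ℤ) : GaussianInt) = (q : ℤ) * (q : ℤ) :=
      Zsqrtd.norm_intCast _
    have h1 : (Zsqrtd.norm π).natAbs ^ 2 ∣ q ^ 2 := by
      have hd : ((Zsqrtd.norm π)^2 ∣ Zsqrtd.norm (q : GaussianInt)) := ⟨_, hxx⟩
      have h2 := Int.natAbs_dvd_natAbs.mpr hd
      rwa [Int.natAbs_pow, ← hcast, hnorm_q, ← sq, Int.natAbs_pow, Int.natAbs_natCast] at h2
    have h3 : (Zsqrtd.norm π).natAbs ∣ q := (Nat.pow_dvd_pow_iff (by norm_num)).mp h1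
    rcases (Nat.Prime.eq_one_or_self_of_dvd hq _ h3) with h | h
    · exact absurd (Zsqrtd.norm_eq_one_iff.mp h) hπ.not_unit
    · exact h
  have hnormeq : (Zsqrtd.norm π) = (q : ℤ) := by
    have h0 := Zsqrtd.norm_nonneg (by norm_num : (-1:ℤ) ≤ 0) π
    rw [← Int.natAbs_of_nonneg h0, hnq]
  -- q = π * star π
  have hmulconj : (q : GaussianInt) = π * star π := by
    rw [← hcast, ← hnormeq]
    exact Zsqrtd.norm_eq_mul_conj π
  -- π divides star π
  have hstar : π ∣ star π := by
    obtain ⟨c, hc⟩ := hdvd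
    rw [hmulconj, sq, mul_assoc] at hc
    exact ⟨c, mul_left_cancel₀ hπ.ne_zero hc⟩
  obtain ⟨u, hu⟩ := hstar
  -- π divides 2 * re and 2 * im
  have hre : π ∣ ((2 * π.re : ℤ) : GaussianInt) := by
    have : ((2 * π.re : ℤ) : GaussianInt) = π + star π := by
      ext <;> simp [Zsqrtd.re_add, Zsqrtd.im_add, Zsqrtd.re_star, Zsqrtd.im_star,
        Zsqrtd.re_intCast, Zsqrtd.im_intCast] <;> ring
    rw [this, hu]
    exact ⟨1 + u, by ring⟩
  have him : π ∣ ((2 * π.im : ℤ) : GaussianInt) := by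
    have h1 : ((2 * π.im : ℤ) : GaussianInt) * Zsqrtd.sqrtd = π - star π := by
      ext <;> simp [Zsqrtd.re_sub, Zsqrtd.im_sub, Zsqrtd.re_star, Zsqrtd.im_star,
        Zsqrtd.re_mul, Zsqrtd.im_mul, Zsqrtd.re_intCast, Zsqrtd.im_intCast] <;> ring
    have h2 : π ∣ ((2 * π.im : ℤ) : GaussianInt) * Zsqrtd.sqrtd := by
      rw [h1, hu]; exact ⟨1 - u, by ring⟩
    have h3 := h2.mul_right Zsqrtd.sqrtd
    have h4 : ((2 * π.im : ℤ) : GaussianInt) * Zsqrtd.sqrtd * Zsqrtd.sqrtd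
        = - ((2 * π.im : ℤ) : GaussianInt) := by
      ext <;> simp [Zsqrtd.re_mul, Zsqrtd.im_mul, Zsqrtd.re_intCast, Zsqrtd.im_intCast,
        Zsqrtd.re_neg, Zsqrtd.im_neg] <;> ring
    rw [h4] at h3
    exact (dvd_neg).mp h3
  -- gcd of re and im is 1
  have hg : Int.gcd π.re π.im = 1 := by
    have hd1 : (Int.gcd π.re π.im : ℤ) ∣ π.re := Int.gcd_dvd_left _ _
    have hd2 : (Int.gcd π.re π.im : ℤ) ∣ π.im := Int.gcd_dvd_right _ _
    have hsq : ((Int.gcd π.re π.im : ℤ))^2 ∣ (q : ℤ) := by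
      rw [← hnormeq, Zsqrtd.norm_def]
      have : π.re * π.re - (-1) * π.im * π.im = π.re * π.re + π.im * π.im := by ring
      rw [this]
      exact dvd_add (by rw [sq]; exact mul_dvd_mul hd1 hd1) (by rw [sq]; exact mul_dvd_mul hd2 hd2)
    have hsqn : (Int.gcd π.re π.im)^2 ∣ q := by
      have := Int.natAbs_dvd_natAbs.mpr hsq
      simpa [Int.natAbs_pow] using this
    rcases (Nat.Prime.eq_one_or_self_of_dvd hq _ (dvd_trans (dvd_pow_self _ (by norm_num)) hsqn)) with h | h
    · exact h
    · -- gcd = q, then q^2 ∣ q, contradiction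
      exfalso
      rw [h] at hsqn
      have := Nat.le_of_dvd hq.pos hsqn
      nlinarith [hq.two_le]
  -- Bezout gives π ∣ 2
  have h2 : π ∣ (2 : GaussianInt) := by
    have hbez := Int.gcd_eq_gcd_ab π.re π.im
    rw [hg] at hbez
    have key : (2 : ℤ) = (2 * π.re) * Int.gcdA π.re π.im + (2 * π.im) * Int.gcdB π.re π.im := by
      push_cast at hbez
      linarith [hbez]
    have : ((2 : ℤ) : GaussianInt) = ((2 * π.re : ℤ) : GaussianInt) * ((Int.gcdA π.re π.im : ℤ) : GaussianInt)
        + ((2 * π.im : ℤ) : GaussianInt) * ((Int.gcdB π.re π.im : ℤ) : GaussianInt) := by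
      have hcg := congrArg (fun z : ℤ => (z : GaussianInt)) key
      simp only [Int.cast_add, Int.cast_mul] at hcg ⊢
      exact hcg
    have hd : π ∣ ((2 : ℤ) : GaussianInt) := by
      rw [this]
      exact dvd_add (hre.mul_right _) (him.mul_right _)
    simpa using hd
  -- norms: q ∣ 4
  obtain ⟨c, hc⟩ := h2
  have hnorm2 : Zsqrtd.norm (2 : GaussianInt) = 4 := by
    rw [show ((2:GaussianInt)) = ((2:ℤ) : GaussianInt) by push_cast; ring, Zsqrtd.norm_intCast]
    norm_num
  have : (q : ℤ) ∣ 4 := by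
    rw [← hnormeq]
    exact ⟨Zsqrtd.norm c, by rw [← Zsqrtd.norm_mul, ← hc, hnorm2]⟩
  have hq4 : q ∣ 4 := by exact_mod_cast this
  have h5 := hq.two_le
  have h6 := Nat.le_of_dvd (by norm_num) hq4
  interval_cases q
  · exact hq2 rfl
  · exact absurd hq4 (by decide)
  · exact absurd hq (by decide)


private lemma aux_step (π : GaussianInt) (hπ : Prime π) (q : ℕ) (hq : q.Prime)
    (hcase : π ∣ (q : GaussianInt) → 2 < q ∧ ¬ π ^ 2 ∣ (q : GaussianInt))
    (C : Matrix (Fin 2) (Fin 2) GaussianInt) (hC : C ^ q = 1)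
    (k : ℕ) (hk : 1 ≤ k) (h : ∀ i j, π ^ k ∣ (C - 1) i j) (i j : Fin 2) :
    π ^ (k + 1) ∣ (C - 1) i j := by
  set M := C - 1 with hM
  -- binomial expansion
  have h1 : C = M + 1 := by rw [hM, sub_add_cancel]
  have hbin : (1 : Matrix (Fin 2) (Fin 2) GaussianInt)
      = ∑ m ∈ Finset.range (q + 1), (q.choose m) • M ^ m := by
    calc (1 : Matrix (Fin 2) (Fin 2) GaussianInt) = C ^ q := hC.symm
      _ = (M + 1) ^ q := by rw [← h1]
      _ = ∑ m ∈ Finset.range (q + 1), M ^ m * 1 ^ (q - m) * (q.choose m : Matrix (Fin 2) (Fin 2) GaussianInt) := Commute.add_pow (Commute.one_right M) q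
      _ = ∑ m ∈ Finset.range (q + 1), (q.choose m) • M ^ m := by
          refine Finset.sum_congr rfl fun m _ => ?_
          rw [one_pow, mul_one, ← (Nat.cast_commute (q.choose m) (M ^ m)).eq, nsmul_eq_mul]
  have hsum : ∑ m ∈ Finset.range (q + 1), (q.choose m) • M ^ m
      = 1 + (q • M + ∑ m ∈ Finset.Ico 2 (q + 1), (q.choose m) • M ^ m) := by
    rw [Finset.range_eq_Ico,
      Finset.sum_eq_sum_Ico_succ_bot (Nat.succ_pos q)
        (fun m => (q.choose m) • M ^ m),
      Finset.sum_eq_sum_Ico_succ_bot (Nat.succ_lt_succ hq.pos)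
        (fun m => (q.choose m) • M ^ m)]
    congr 1
    · simp
    congr 1
    · simp [Nat.choose_one_right]
  have hmat : q • M + ∑ m ∈ Finset.Ico 2 (q + 1), (q.choose m) • M ^ m = 0 :=
    left_eq_add.mp (hbin.trans hsum)
  -- entrywise
  have hent : (q : GaussianInt) * M i j
      = - ∑ m ∈ Finset.Ico 2 (q + 1), (q.choose m : GaussianInt) * (M ^ m) i j := by
    have := congrFun (congrFun hmat i) j
    simp only [Matrix.add_apply, Matrix.sum_apply, Matrix.smul_apply, Matrix.zero_apply] at this
    simp only [nsmul_eq_mul] at this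
    exact eq_neg_of_add_eq_zero_left this
  have hentry : ∀ m, 2 ≤ m → π ^ (k * m) ∣ (M ^ m) i j := by
    intro m hm
    obtain ⟨m', rfl⟩ : ∃ m', m = m' + 1 := ⟨m - 1, by omega⟩
    have h2 := aux_dvd_pow_entries (π ^ k) M h m' i j
    rwa [← pow_mul] at h2
  by_cases hπq : π ∣ (q : GaussianInt)
  · obtain ⟨hq3, hsq⟩ := hcase hπq
    -- π^(2k+1) divides the sum
    have hsumdvd : π ^ (2 * k + 1) ∣ (q : GaussianInt) * M i j := by
      rw [hent]
      rw [dvd_neg]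
      refine Finset.dvd_sum fun m hm => ?_
      rw [Finset.mem_Ico] at hm
      rcases Nat.lt_or_ge m q with hmq | hmq
      · have hch : (q : ℕ) ∣ q.choose m := Nat.Prime.dvd_choose_self hq (by omega) hmq
        have hπch : π ∣ (q.choose m : GaussianInt) := hπq.trans (Nat.cast_dvd_cast hch)
        have hme : π ^ (2 * k) ∣ (M ^ m) i j :=
          (pow_dvd_pow π (by nlinarith [hm.1, hk] : 2 * k ≤ k * m)).trans (hentry m hm.1)
        calc π ^ (2 * k + 1) = π * π ^ (2 * k) := by ring
          _ ∣ (q.choose m : GaussianInt) * (M ^ m) i j := mul_dvd_mul hπch hme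
      · -- m = q ≥ 3
        have hme : π ^ (2 * k + 1) ∣ (M ^ m) i j :=
          (pow_dvd_pow π (by nlinarith [hm.1, hk, hq3] : 2 * k + 1 ≤ k * m)).trans
            (hentry m hm.1)
        exact hme.mul_left _
    -- write q = π * c with π not dividing c
    obtain ⟨c, hc⟩ := hπq
    have hπc : ¬ π ∣ c := fun hd => hsq (by rw [hc, sq]; exact mul_dvd_mul_left π hd)
    have hred : π ^ (2 * k) ∣ c * M i j := by
      have : π ^ (2 * k + 1) ∣ π * (c * M i j) := by
        rw [← mul_assoc, ← hc]; exact hsumdvd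
      rw [pow_succ'] at this
      exact (mul_dvd_mul_iff_left hπ.ne_zero).mp this
    have := hπ.pow_dvd_of_dvd_mul_left (2 * k) hπc hred
    exact (pow_dvd_pow π (by omega : k + 1 ≤ 2 * k)).trans this
  · -- π does not divide q
    have hsumdvd : π ^ (k + 1) ∣ (q : GaussianInt) * M i j := by
      rw [hent, dvd_neg]
      refine Finset.dvd_sum fun m hm => ?_
      rw [Finset.mem_Ico] at hm
      exact ((pow_dvd_pow π (by nlinarith [hm.1, hk] : k + 1 ≤ k * m)).trans
        (hentry m hm.1)).mul_left _
    exact hπ.pow_dvd_of_dvd_mul_left (k + 1) hπq hsumdvd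


private lemma aux_pow_cong (π : GaussianInt) (X : Matrix (Fin 2) (Fin 2) GaussianInt)
    (hX : ∀ i j, π ∣ (X - 1) i j) : ∀ m : ℕ, ∀ i j, π ∣ (X ^ m - 1) i j := by
  intro m
  induction m with
  | zero => intro i j; simp
  | succ m ih =>
    intro i j
    have key : X ^ (m + 1) - 1 = (X ^ m - 1) * X + (X - 1) := by
      rw [pow_succ]; noncomm_ring
    rw [key]
    rw [Matrix.add_apply, Matrix.mul_apply]
    exact dvd_add (Finset.dvd_sum fun l _ => (ih i l).mul_right _) (hX i j)


private lemma aux_eq_one (π : GaussianInt) (hπ : Prime π) (q : ℕ) (hq : q.Prime)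
    (hcase : π ∣ (q : GaussianInt) → 2 < q ∧ ¬ π ^ 2 ∣ (q : GaussianInt))
    (C : Matrix (Fin 2) (Fin 2) GaussianInt) (hC : C ^ q = 1)
    (h1 : ∀ i j, π ∣ (C - 1) i j) : C = 1 := by
  have hall : ∀ k : ℕ, ∀ i j, π ^ (k + 1) ∣ (C - 1) i j := by
    intro k
    induction k with
    | zero => intro i j; simpa using h1 i j
    | succ k ih => exact aux_step π hπ q hq hcase C hC (k + 1) (by omega) ih
  have hzero : ∀ i j, (C - 1) i j = 0 := by
    intro i j
    refine aux_zero_of_forall_pow_dvd π hπ _ fun k => ?_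
    rcases k with _ | k
    · simp
    · exact hall k i j
  have : C - 1 = 0 := Matrix.ext fun i j => by rw [hzero i j]; simp
  have := sub_eq_zero.mp this
  simpa using this

/-- Let `I` be a prime ideal of `ℤ[i]` with `char(ℤ[i]/I) ≠ 2`. If `A ∈ SL₂(ℤ[i])` has
finite order and every entry of `A - 1` lies in `I`, then `A = 1`. -/
theorem eq_one_of_isOfFinOrder_of_sub_one_mem (I : Ideal GaussianInt) (hI : I.IsPrime)
    (hchar : ringChar (GaussianInt ⧸ I) ≠ 2)
    (A : Matrix.SpecialLinearGroup (Fin 2) GaussianInt) (hA : IsOfFinOrder A)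
    (hmem : ∀ i j : Fin 2, ((A : Matrix (Fin 2) (Fin 2) GaussianInt) - 1) i j ∈ I) :
    A = 1 := by
  by_cases hbot : I = ⊥
  · subst hbot
    apply Subtype.ext
    have hz : (A : Matrix (Fin 2) (Fin 2) GaussianInt) - 1 = 0 := Matrix.ext fun i j => by
      have := hmem i j; rwa [Ideal.mem_bot] at this
    have h2 := sub_eq_zero.mp hz
    simpa using h2
  · obtain ⟨π, hπI⟩ : ∃ π, I = Ideal.span {π} :=
      ⟨Submodule.IsPrincipal.generator I, (Ideal.span_singleton_generator I).symm⟩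
    subst hπI
    have hπ0 : π ≠ 0 := by
      intro h
      exact hbot (by rw [h]; simp)
    have hπ : Prime π := (Ideal.span_singleton_prime hπ0).mp hI
    have hdvdA : ∀ i j, π ∣ ((A : Matrix (Fin 2) (Fin 2) GaussianInt) - 1) i j :=
      fun i j => Ideal.mem_span_singleton.mp (hmem i j)
    have hcase : ∀ q : ℕ, q.Prime →
        (π ∣ (q : GaussianInt) → 2 < q ∧ ¬ π ^ 2 ∣ (q : GaussianInt)) := by
      intro q hq hd
      have hmem' : (q : GaussianInt) ∈ Ideal.span {π} := Ideal.mem_span_singleton.mpr hd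
      have h0 : ((q : ℕ) : GaussianInt ⧸ Ideal.span {π}) = 0 := by
        rw [← map_natCast (Ideal.Quotient.mk (Ideal.span ({π} : Set GaussianInt)))]
        exact (Ideal.Quotient.eq_zero_iff_mem).mpr hmem'
      have hr : ringChar (GaussianInt ⧸ Ideal.span ({π} : Set GaussianInt)) ∣ q :=
        (ringChar.spec _ q).mp h0
      rcases hq.eq_one_or_self_of_dvd _ hr with h | h
      · exfalso
        have h1 : ((1 : ℕ) : GaussianInt ⧸ Ideal.span ({π} : Set GaussianInt)) = 0 :=
          (ringChar.spec _ 1).mpr (h ▸ dvd_refl _)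
        rw [Nat.cast_one] at h1
        have hone : (1 : GaussianInt) ∈ Ideal.span ({π} : Set GaussianInt) := by
          rwa [← map_one (Ideal.Quotient.mk (Ideal.span ({π} : Set GaussianInt))),
            Ideal.Quotient.eq_zero_iff_mem] at h1
        exact hI.ne_top ((Ideal.eq_top_iff_one _).mpr hone)
      · have hq2 : q ≠ 2 := fun hc => hchar (h ▸ hc)
        exact ⟨by have := hq.two_le; omega, aux_not_sq_dvd π hπ q hq hq2⟩
    by_contra hA1
    have hn0 : 0 < orderOf A := hA.orderOf_pos
    have hn1 : orderOf A ≠ 1 := fun h => hA1 (orderOf_eq_one_iff.mp h)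
    have hq : (orderOf A).minFac.Prime := Nat.minFac_prime hn1
    have hqd : (orderOf A).minFac ∣ orderOf A := Nat.minFac_dvd _
    set n := orderOf A with hn
    set q := n.minFac with hqdef
    have hCpow : (A ^ (n / q)) ^ q = 1 := by
      rw [← pow_mul, Nat.div_mul_cancel hqd]
      exact pow_orderOf_eq_one A
    have hCq : ((A ^ (n / q) : Matrix.SpecialLinearGroup (Fin 2) GaussianInt) :
        Matrix (Fin 2) (Fin 2) GaussianInt) ^ q = 1 := by
      rw [← Matrix.SpecialLinearGroup.coe_pow, hCpow]
      rfl
    have hCd : ∀ i j, π ∣ (((A ^ (n / q) : Matrix.SpecialLinearGroup (Fin 2) GaussianInt) :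
        Matrix (Fin 2) (Fin 2) GaussianInt) - 1) i j := by
      intro i j
      have := aux_pow_cong π (A : Matrix (Fin 2) (Fin 2) GaussianInt) hdvdA (n / q) i j
      rwa [← Matrix.SpecialLinearGroup.coe_pow] at this
    have hC1 : (A ^ (n / q) : Matrix.SpecialLinearGroup (Fin 2) GaussianInt) = 1 := by
      apply Subtype.ext
      exact aux_eq_one π hπ q hq (hcase q hq) _ hCq hCd
    have hdv : n ∣ n / q := orderOf_dvd_of_pow_eq_one hC1
    have hlt : n / q < n := Nat.div_lt_self hn0 hq.one_lt
    have hpos : 0 < n / q := Nat.div_pos (Nat.minFac_le hn0) hq.pos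
    exact absurd (Nat.le_of_dvd hpos hdv) (by omega)
end

section
/- Let A ∈ SL₂(ℤ[i]) and suppose there exists an integer n ≥ 1 such that Aⁿ = 1 or Aⁿ = −1 (where 1 denotes the identity matrix). Then trace(A) is one of the elements −2, −1, 0, 1, 2 of ℤ[i]. -/
open Matrix MatrixGroups

instance : Fact (Even (Fintype.card (Fin 2))) := ⟨by simp⟩

/-- If `A ∈ SL₂(ℤ[i])` satisfies `Aⁿ = 1` or `Aⁿ = -1` for some `n ≥ 1`, then
`trace A ∈ {-2, -1, 0, 1, 2}`. -/
theorem trace_mem_of_pow_eq_one_or_neg_one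
    (A : Matrix.SpecialLinearGroup (Fin 2) GaussianInt)
    (h : ∃ n : ℕ, 1 ≤ n ∧ (A ^ n = 1 ∨ A ^ n = -1)) :
    Matrix.trace (A : Matrix (Fin 2) (Fin 2) GaussianInt) ∈
      ({-2, -1, 0, 1, 2} : Set GaussianInt) := by
  obtain ⟨n, hn, hA⟩ := h
  set t : GaussianInt := Matrix.trace (A : Matrix (Fin 2) (Fin 2) GaussianInt) with ht
  -- A^(2n) = 1 in the group
  have hgrp : A ^ (2 * n) = 1 := by
    rw [two_mul, pow_add]
    rcases hA with h1 | h1 <;> rw [h1] <;> simp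
  have h2n : (A : Matrix (Fin 2) (Fin 2) GaussianInt) ^ (2 * n) = 1 := by
    have := congrArg (fun M : Matrix.SpecialLinearGroup (Fin 2) GaussianInt =>
      (M : Matrix (Fin 2) (Fin 2) GaussianInt)) hgrp
    simpa using this
  -- move to ℂ
  set B : Matrix (Fin 2) (Fin 2) ℂ := GaussianInt.toComplex.mapMatrix A with hB
  have hB2n : B ^ (2 * n) = 1 := by
    rw [hB, ← map_pow, h2n, _root_.map_one]
  have hdet : B.det = 1 := by
    rw [hB, ← RingHom.map_det, A.2, _root_.map_one]
  have htr : B.trace = GaussianInt.toComplex t := by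
    rw [hB, RingHom.mapMatrix_apply]
    exact (AddMonoidHom.map_trace GaussianInt.toComplex.toAddMonoidHom _).symm
  set c : ℂ := GaussianInt.toComplex t with hc
  -- Cayley–Hamilton
  have hCH : B ^ 2 - c • B + 1 = 0 := by
    have hd : B 0 0 * B 1 1 - B 0 1 * B 1 0 = 1 := by rw [← Matrix.det_fin_two]; exact hdet
    have ht2 : B 0 0 + B 1 1 = c := by rw [← Matrix.trace_fin_two]; exact htr
    ext i j
    fin_cases i <;> fin_cases j <;>
      simp [pow_two, Matrix.mul_apply, Fin.sum_univ_two, Matrix.one_apply,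
        Matrix.smul_apply, smul_eq_mul] <;>
      first
        | linear_combination B 0 0 * ht2 - hd
        | linear_combination B 0 1 * ht2
        | linear_combination B 1 0 * ht2
        | linear_combination B 1 1 * ht2 - hd
  -- eigenvalue
  set f : Module.End ℂ (Fin 2 → ℂ) := Matrix.toLinAlgEquiv' B with hf
  obtain ⟨μ, hμ⟩ := Module.End.exists_eigenvalue f
  obtain ⟨v, hv⟩ := hμ.exists_hasEigenvector
  clear_value f
  clear_value B
  clear_value c
  clear_value t
  have hμ2n : μ ^ (2 * n) = 1 := by
    have h1 : (f ^ (2 * n)) v = μ ^ (2 * n) • v := hv.pow_apply (2 * n)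
    have h2 : f ^ (2 * n) = 1 := by
      rw [hf, ← map_pow, hB2n, _root_.map_one]
    rw [h2] at h1
    simp only [Module.End.one_apply] at h1
    have h3 : (μ ^ (2 * n) - 1) • v = 0 := by
      rw [sub_smul, one_smul, ← h1, sub_self]
    rcases smul_eq_zero.mp h3 with h | h
    · linear_combination (norm := ring_nf) h
    · exact absurd h hv.2
  -- quadratic relation
  have hquad : μ ^ 2 - c * μ + 1 = 0 := by
    have h1 : (f ^ 2 - c • f + 1 : Module.End ℂ (Fin 2 → ℂ)) v = (μ ^ 2 - c * μ + 1) • v := by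
      have hfv : f v = μ • v := hv.apply_eq_smul
      have hf2 : (f ^ 2) v = μ ^ 2 • v := hv.pow_apply 2
      simp only [LinearMap.add_apply, LinearMap.sub_apply, LinearMap.smul_apply,
        Module.End.one_apply, hf2, hfv, smul_smul]
      module
    have h2 : (f ^ 2 - c • f + 1 : Module.End ℂ (Fin 2 → ℂ)) = 0 := by
      have h3 := congrArg (Matrix.toLinAlgEquiv' (n := Fin 2) (R := ℂ)) hCH
      simpa [_root_.map_pow, map_sub, map_add, _root_.map_smul, _root_.map_one, hf]
        using h3
    rw [h2] at h1
    simp only [LinearMap.zero_apply] at h1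
    rcases smul_eq_zero.mp h1.symm with h | h
    · exact h
    · exact absurd h hv.2
  -- |μ| = 1
  have hμne : μ ≠ 0 := by
    intro h0
    rw [h0, zero_pow (by omega)] at hμ2n
    exact zero_ne_one hμ2n
  have habs : ‖μ‖ = 1 := by
    have h1 : ‖μ‖ ^ (2 * n) = 1 := by
      rw [← norm_pow, hμ2n, norm_one]
    have h2 : (0 : ℝ) ≤ ‖μ‖ := norm_nonneg μ
    rcases lt_trichotomy (‖μ‖) 1 with hlt | heq | hgt
    · have h4 := pow_lt_one₀ h2 hlt (by omega : 2 * n ≠ 0)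
      rw [h1] at h4
      exact absurd h4 (lt_irrefl 1)
    · exact heq
    · have h4 := one_lt_pow₀ hgt (by omega : 2 * n ≠ 0)
      rw [h1] at h4
      exact absurd h4 (lt_irrefl 1)
  -- c = μ + conj μ
  have hconj : (starRingEnd ℂ) μ = μ⁻¹ := by
    rw [Complex.inv_def]
    have : Complex.normSq μ = 1 := by
      rw [← Complex.sq_norm, habs, one_pow]
    rw [this]
    simp
  have hcval : c = μ + (starRingEnd ℂ) μ := by
    rw [hconj]
    field_simp
    linear_combination -hquad
  have hcim : c.im = 0 := by
    rw [hcval]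
    simp [Complex.add_im, Complex.conj_im]
  have hcre : |c.re| ≤ 2 := by
    rw [hcval]
    have := Complex.abs_re_le_norm μ
    rw [habs] at this
    simp only [Complex.add_re, Complex.conj_re]
    rw [abs_le] at this ⊢
    constructor <;> linarith [this.1, this.2]
  -- back to GaussianInt
  have hdef : c = (t.re : ℝ) + (t.im : ℝ) * Complex.I := by
    rw [hc]
    exact_mod_cast GaussianInt.toComplex_def t
  have hcim' : c.im = (t.im : ℝ) := by rw [hdef]; simp
  have hcre' : c.re = (t.re : ℝ) := by rw [hdef]; simp
  have him : t.im = 0 := by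
    rw [hcim'] at hcim
    exact_mod_cast hcim
  have hre : |t.re| ≤ 2 := by
    rw [hcre'] at hcre
    exact_mod_cast hcre
  rw [abs_le] at hre
  have hre2 : t.re = -2 ∨ t.re = -1 ∨ t.re = 0 ∨ t.re = 1 ∨ t.re = 2 := by omega
  have hteq : t = ((t.re : ℤ) : GaussianInt) := by
    ext
    · simp
    · simp [him]
  rw [hteq]
  rcases hre2 with h | h | h | h | h <;> rw [h] <;> push_cast <;> simp [Set.mem_insert_iff]
end

section
/- For every maximal ideal I of the Gaussian integers ℤ[i], the reduction homomorphism SL₂(ℤ[i]) → SL₂(ℤ[i]/I), induced entrywise by the quotient ring homomorphism ℤ[i] → ℤ[i]/I, is surjective. -/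
open Matrix MatrixGroups

set_option maxHeartbeats 1000000 in
/-- For every maximal ideal `I` of the Gaussian integers `ℤ[i]`, the entrywise reduction
homomorphism `SL₂(ℤ[i]) → SL₂(ℤ[i]/I)` is surjective. -/
theorem sl2_map_quotient_surjective (I : Ideal GaussianInt) (hI : I.IsMaximal) :
    Function.Surjective
      (Matrix.SpecialLinearGroup.map (Ideal.Quotient.mk I) :
        Matrix.SpecialLinearGroup (Fin 2) GaussianInt →*
          Matrix.SpecialLinearGroup (Fin 2) (GaussianInt ⧸ I)) := by
  haveI := hI
  letI : Field (GaussianInt ⧸ I) := Ideal.Quotient.field I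
  set q : GaussianInt →+* GaussianInt ⧸ I := Ideal.Quotient.mk I with hq
  set φ := (Matrix.SpecialLinearGroup.map q :
      Matrix.SpecialLinearGroup (Fin 2) GaussianInt →*
        Matrix.SpecialLinearGroup (Fin 2) (GaussianInt ⧸ I)) with hφ
  have hqsurj : Function.Surjective q := Ideal.Quotient.mk_surjective
  have hdetU : ∀ {R : Type} [CommRing R] (t : R),
      (!![1, t; 0, 1] : Matrix (Fin 2) (Fin 2) R).det = 1 := by
    intro R _ t; simp [Matrix.det_fin_two_of]
  have hdetL : ∀ {R : Type} [CommRing R] (t : R),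
      (!![1, 0; t, 1] : Matrix (Fin 2) (Fin 2) R).det = 1 := by
    intro R _ t; simp [Matrix.det_fin_two_of]
  have hU : ∀ t : GaussianInt ⧸ I,
      (⟨!![1, t; 0, 1], hdetU t⟩ :
        Matrix.SpecialLinearGroup (Fin 2) (GaussianInt ⧸ I)) ∈ φ.range := by
    intro t
    obtain ⟨T, hT⟩ := hqsurj t
    refine ⟨⟨!![1, T; 0, 1], hdetU T⟩, ?_⟩
    ext i j
    fin_cases i <;> fin_cases j <;>
      simp only [hφ] <;> erw [Matrix.SpecialLinearGroup.map_apply_coe] <;> simp [hT]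
  have hL : ∀ t : GaussianInt ⧸ I,
      (⟨!![1, 0; t, 1], hdetL t⟩ :
        Matrix.SpecialLinearGroup (Fin 2) (GaussianInt ⧸ I)) ∈ φ.range := by
    intro t
    obtain ⟨T, hT⟩ := hqsurj t
    refine ⟨⟨!![1, 0; T, 1], hdetL T⟩, ?_⟩
    ext i j
    fin_cases i <;> fin_cases j <;>
      simp only [hφ] <;> erw [Matrix.SpecialLinearGroup.map_apply_coe] <;> simp [hT]
  have key : ∀ g : Matrix.SpecialLinearGroup (Fin 2) (GaussianInt ⧸ I),
      (g : Matrix (Fin 2) (Fin 2) (GaussianInt ⧸ I)) 1 0 ≠ 0 → g ∈ φ.range := by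
    intro g hc
    set a := (g : Matrix (Fin 2) (Fin 2) (GaussianInt ⧸ I)) 0 0 with ha
    set b := (g : Matrix (Fin 2) (Fin 2) (GaussianInt ⧸ I)) 0 1 with hb
    set c := (g : Matrix (Fin 2) (Fin 2) (GaussianInt ⧸ I)) 1 0 with hcc
    set d := (g : Matrix (Fin 2) (Fin 2) (GaussianInt ⧸ I)) 1 1 with hd
    have hdet : a * d - b * c = 1 := by
      have := g.prop
      rw [Matrix.det_fin_two] at this
      exact this
    have hmat : (g : Matrix (Fin 2) (Fin 2) (GaussianInt ⧸ I)) =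
        !![1, (a - 1) * c⁻¹; 0, 1] * !![1, 0; c, 1] * !![1, (d - 1) * c⁻¹; 0, 1] := by
      ext i j
      fin_cases i <;> fin_cases j <;>
        simp only [Matrix.mul_apply, Fin.sum_univ_two, Matrix.cons_val', Matrix.cons_val_zero,
          Matrix.cons_val_one, Matrix.head_cons, Matrix.head_fin_const, Matrix.empty_val',
          Matrix.cons_val_fin_one, Fin.zero_eta, Fin.mk_one, Matrix.of_apply, ← ha, ← hb, ← hcc, ← hd] <;>
        field_simp <;>
        first
          | linear_combination hdet
          | linear_combination 2 * hdet
          | linear_combination -hdet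
          | linear_combination -2 * hdet
          | ring
    have hg : g = (⟨!![1, (a - 1) * c⁻¹; 0, 1], hdetU _⟩ * ⟨!![1, 0; c, 1], hdetL _⟩ *
          ⟨!![1, (d - 1) * c⁻¹; 0, 1], hdetU _⟩ :
          Matrix.SpecialLinearGroup (Fin 2) (GaussianInt ⧸ I)) := by
      apply Subtype.ext
      exact hmat
    rw [hg]
    exact mul_mem (mul_mem (hU _) (hL _)) (hU _)
  intro g
  rcases eq_or_ne ((g : Matrix (Fin 2) (Fin 2) (GaussianInt ⧸ I)) 1 0) 0 with hc | hc
  · have hd : (g : Matrix (Fin 2) (Fin 2) (GaussianInt ⧸ I)) 1 1 ≠ 0 := by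
      intro h
      have := g.prop
      rw [Matrix.det_fin_two, h, hc] at this
      simp at this
    set L : Matrix.SpecialLinearGroup (Fin 2) (GaussianInt ⧸ I) :=
      ⟨!![1, 0; (1 : GaussianInt ⧸ I), 1], hdetL _⟩ with hLdef
    have h1 : ((g * L : Matrix.SpecialLinearGroup (Fin 2) (GaussianInt ⧸ I)) :
        Matrix (Fin 2) (Fin 2) (GaussianInt ⧸ I)) 1 0 ≠ 0 := by
      show ((g : Matrix (Fin 2) (Fin 2) (GaussianInt ⧸ I)) * (L : Matrix (Fin 2) (Fin 2) (GaussianInt ⧸ I))) 1 0 ≠ 0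
      simp only [Matrix.SpecialLinearGroup.coe_mul, hLdef, Matrix.mul_apply, Fin.sum_univ_two]
      simpa [hc] using hd
    have h2 : g * L ∈ φ.range := key _ h1
    have h3 : g = (g * L) * L⁻¹ := (mul_inv_cancel_right g L).symm
    rw [h3]
    exact mul_mem h2 (inv_mem (hL 1))
  · exact key g hc
end

section
/- Let I be a prime ideal of the Gaussian integers ℤ[i] whose quotient ring ℤ[i]/I is a finite field of odd cardinality q. Then the kernel Γ₀(I) of the induced homomorphism PSL₂(ℤ[i]) → PSL₂(ℤ[i]/I) has index q(q² − 1)/2 in PSL₂(ℤ[i]). -/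
open Matrix MatrixGroups

section Aux
open Function

variable {R F : Type*} [CommRing R] [Field F]

lemma transvection_mem_range (f : R →+* F) (hf : Surjective f)
    {n : Type*} [DecidableEq n] [Fintype n] (i j : n) (hij : i ≠ j) (c : F)
    (h : det (transvection i j c) = 1) :
    (⟨transvection i j c, h⟩ : Matrix.SpecialLinearGroup n F) ∈
      (Matrix.SpecialLinearGroup.map (f := f) (n := n)).range := by
  obtain ⟨c', rfl⟩ := hf c
  refine ⟨⟨transvection i j c', det_transvection_of_ne i j hij c'⟩, ?_⟩
  ext a b
  show ((transvection i j c').map f) a b = _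
  simp [transvection, Matrix.map_apply, Matrix.single,
    Matrix.one_apply, apply_ite f, Matrix.SpecialLinearGroup.map_apply_coe]

lemma prod_transvec_mem_range (f : R →+* F) (hf : Surjective f)
    (L : List (TransvectionStruct (Fin 2) F))
    (h : det (L.map TransvectionStruct.toMatrix).prod = 1) :
    (⟨(L.map TransvectionStruct.toMatrix).prod, h⟩ : Matrix.SpecialLinearGroup (Fin 2) F) ∈
      (Matrix.SpecialLinearGroup.map (f := f) (n := Fin 2)).range := by
  induction L with
  | nil =>
      exact ⟨1, Subtype.ext (by simp)⟩
  | cons t L ih =>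
      have h2 : det (L.map TransvectionStruct.toMatrix).prod = 1 :=
        TransvectionStruct.det_toMatrix_prod L
      obtain ⟨a, ha⟩ := transvection_mem_range f hf t.i t.j t.hij t.c t.det
      obtain ⟨b, hb⟩ := ih h2
      refine ⟨a * b, ?_⟩
      apply Subtype.ext
      rw [_root_.map_mul, ha, hb]
      simp [TransvectionStruct.toMatrix]
      rfl

lemma diagonal_mem_range (f : R →+* F) (hf : Surjective f)
    (D : Fin 2 → F) (h : det (diagonal D) = 1) :
    (⟨diagonal D, h⟩ : Matrix.SpecialLinearGroup (Fin 2) F) ∈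
      (Matrix.SpecialLinearGroup.map (f := f) (n := Fin 2)).range := by
  have hdet : D 0 * D 1 = 1 := by
    simpa [Fin.prod_univ_two] using h
  have ha : D 0 ≠ 0 := left_ne_zero_of_mul_eq_one hdet
  have hb : D 1 = (D 0)⁻¹ := by
    field_simp
    linear_combination hdet
  have h01 : (0 : Fin 2) ≠ 1 := by decide
  have h10 : (1 : Fin 2) ≠ 0 := by decide
  obtain ⟨a1, ha1⟩ := transvection_mem_range f hf (0:Fin 2) 1 h01 (D 0)
    (det_transvection_of_ne _ _ h01 _)
  obtain ⟨a2, ha2⟩ := transvection_mem_range f hf (1:Fin 2) 0 h10 (-(D 0)⁻¹)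
    (det_transvection_of_ne _ _ h10 _)
  obtain ⟨a3, ha3⟩ := transvection_mem_range f hf (0:Fin 2) 1 h01 (-1)
    (det_transvection_of_ne _ _ h01 _)
  obtain ⟨a4, ha4⟩ := transvection_mem_range f hf (1:Fin 2) 0 h10 1
    (det_transvection_of_ne _ _ h10 _)
  refine ⟨a1 * a2 * a1 * a3 * a4 * a3, ?_⟩
  apply Subtype.ext
  rw [_root_.map_mul, _root_.map_mul, _root_.map_mul, _root_.map_mul, _root_.map_mul,
    ha1, ha2, ha3, ha4]
  show (transvection 0 1 (D 0) * transvection 1 0 (-(D 0)⁻¹) * transvection 0 1 (D 0) *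
    transvection 0 1 (-1) * transvection 1 0 1 * transvection 0 1 (-1) :
      Matrix (Fin 2) (Fin 2) F) = diagonal D
  ext i j
  fin_cases i <;> fin_cases j <;>
    simp [transvection, Matrix.mul_apply, Fin.sum_univ_two, Matrix.one_apply, hb] <;>
    field_simp <;> ring

lemma SL2_map_surjective (f : R →+* F) (hf : Surjective f) :
    Surjective (Matrix.SpecialLinearGroup.map (f := f) (n := Fin 2)) := by
  intro M
  obtain ⟨L, L', D, hM⟩ :=
    Matrix.Pivot.exists_list_transvec_mul_diagonal_mul_list_transvec (M : Matrix (Fin 2) (Fin 2) F)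
  have hL : det (L.map TransvectionStruct.toMatrix).prod = 1 :=
    TransvectionStruct.det_toMatrix_prod L
  have hL' : det (L'.map TransvectionStruct.toMatrix).prod = 1 :=
    TransvectionStruct.det_toMatrix_prod L'
  have hD : det (diagonal D) = 1 := by
    have := M.property
    rw [hM] at this
    simpa [hL, hL'] using this
  obtain ⟨a, ha⟩ := prod_transvec_mem_range f hf L hL
  obtain ⟨b, hb⟩ := diagonal_mem_range f hf D hD
  obtain ⟨c, hc⟩ := prod_transvec_mem_range f hf L' hL'
  refine ⟨a * b * c, ?_⟩
  apply Subtype.ext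
  rw [_root_.map_mul, _root_.map_mul, ha, hb, hc]
  exact hM.symm


lemma pslMap_surjective (f : R →+* F) (hf : Surjective f) :
    Surjective (pslMap f) := by
  intro x
  obtain ⟨y, rfl⟩ := QuotientGroup.mk'_surjective _ x
  obtain ⟨A, hA⟩ := SL2_map_surjective f hf y
  exact ⟨QuotientGroup.mk' _ A, by simp [pslMap, ← hA]⟩

section Card
variable (F : Type*) [Field F] [Fintype F]

lemma card_rootsOfUnity_two (hodd : Odd (Fintype.card F)) :
    Nat.card (rootsOfUnity 2 F) = 2 := by
  have hchar : (-1 : F) ≠ 1 := by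
    intro h
    rw [neg_one_eq_one_iff] at h
    have := FiniteField.even_card_of_char_two (F := F) h
    rw [Nat.odd_iff] at hodd
    omega
  have hne : (-1 : Fˣ) ≠ 1 := fun h => hchar (by
    simpa using congrArg Units.val h)
  have : rootsOfUnity 2 F = Subgroup.zpowers (-1 : Fˣ) := by
    ext u
    rw [mem_rootsOfUnity]
    constructor
    · intro hu
      have : (u : F) ^ 2 = 1 := by
        rw [← Units.val_pow_eq_pow_val, hu, Units.val_one]
      rcases sq_eq_one_iff.mp this with h | h
      · have : u = 1 := Units.ext (by simpa using h)
        rw [this]; exact one_mem _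
      · have : u = -1 := Units.ext (by simpa using h)
        rw [this]; exact Subgroup.mem_zpowers _
    · intro hu
      obtain ⟨k, rfl⟩ := hu
      show ((-1 : Fˣ) ^ k) ^ (2 : ℕ) = 1
      rw [← zpow_natCast ((-1 : Fˣ) ^ k), ← _root_.zpow_mul, mul_comm, _root_.zpow_mul,
        zpow_natCast, neg_one_sq, _root_.one_zpow]
  rw [this, Nat.card_zpowers]
  exact orderOf_eq_prime neg_one_sq hne

lemma card_SL2 : Nat.card (Matrix.SpecialLinearGroup (Fin 2) F) * (Fintype.card F - 1)
    = Nat.card (GL (Fin 2) F) := by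
  classical
  set d := (Matrix.GeneralLinearGroup.det : GL (Fin 2) F →* Fˣ)
  have hsurj : Surjective d := by
    intro u
    refine ⟨Matrix.GeneralLinearGroup.mkOfDetNeZero (diagonal ![(u : F), 1]) ?_, ?_⟩
    · simp [Fin.prod_univ_two]
    · apply Units.ext
      simp [d, Matrix.GeneralLinearGroup.mkOfDetNeZero, Matrix.GeneralLinearGroup.mk',
        Matrix.unitOfDetInvertible, Fin.prod_univ_two]
  have hker : Nat.card d.ker = Nat.card (Matrix.SpecialLinearGroup (Fin 2) F) := by
    refine Nat.card_congr (Equiv.symm ⟨fun A => ⟨Matrix.SpecialLinearGroup.toGL A, ?_⟩,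
      fun A => ⟨(A : GL (Fin 2) F), ?_⟩, fun A => ?_, fun A => ?_⟩)
    · exact Units.ext (by simp [d, Matrix.SpecialLinearGroup.toGL])
    · have : d A.1 = 1 := A.2
      have := congrArg Units.val this
      simpa [d] using this
    · rfl
    · exact Subtype.ext (Units.ext rfl)
  have := Subgroup.index_mul_card (d.ker)
  rw [Subgroup.index_ker, MonoidHom.range_eq_top.mpr hsurj] at this
  rw [← this, hker]
  have : Nat.card (⊤ : Subgroup Fˣ) = Fintype.card F - 1 := by
    rw [Subgroup.card_top, Nat.card_eq_fintype_card, Fintype.card_units]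
  rw [this, mul_comm]

lemma card_PSL2 (hodd : Odd (Fintype.card F)) :
    Nat.card (Matrix.ProjectiveSpecialLinearGroup (Fin 2) F)
      = Fintype.card F * (Fintype.card F ^ 2 - 1) / 2 := by
  set q := Fintype.card F with hq
  have hq2 : 2 ≤ q := Fintype.one_lt_card
  have hGL : Nat.card (GL (Fin 2) F) = (q ^ 2 - 1) * (q ^ 2 - q) := by
    rw [Matrix.card_GL_field]
    simp [Fin.prod_univ_two]
    rfl
  have e1 : q ^ 2 - q = q * (q - 1) := by
    rw [Nat.mul_sub, mul_one, ← pow_two]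
  have hSL : Nat.card (Matrix.SpecialLinearGroup (Fin 2) F) = q * (q ^ 2 - 1) := by
    have h := card_SL2 F
    rw [hGL, e1] at h
    have h2 : (q ^ 2 - 1) * (q * (q - 1)) = q * (q ^ 2 - 1) * (q - 1) := by ring
    rw [h2] at h
    exact Nat.eq_of_mul_eq_mul_right (by omega) h
  have hcenter : Nat.card (Subgroup.center (Matrix.SpecialLinearGroup (Fin 2) F)) = 2 := by
    rw [Nat.card_congr (Matrix.SpecialLinearGroup.center_equiv_rootsOfUnity' (0 : Fin 2)).toEquiv]
    have : Fintype.card (Fin 2) = 2 := Fintype.card_fin 2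
    rw [this]
    exact card_rootsOfUnity_two F hodd
  have key := Subgroup.index_mul_card (Subgroup.center (Matrix.SpecialLinearGroup (Fin 2) F))
  rw [hcenter, hSL] at key
  have : Nat.card (Matrix.ProjectiveSpecialLinearGroup (Fin 2) F)
      = (Subgroup.center (Matrix.SpecialLinearGroup (Fin 2) F)).index :=
    (Subgroup.index_eq_card _).symm
  omega

end Card

end Aux

/-- Let `I` be a prime ideal of `ℤ[i]` whose quotient is a finite field of odd
cardinality `q`. Then the kernel `Γ₀(I)` of the induced homomorphism
`PSL₂(ℤ[i]) → PSL₂(ℤ[i]/I)` has index `q(q² - 1)/2`. -/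
theorem gamma0_index (I : Ideal GaussianInt) (hI : I.IsPrime)
    [Fintype (GaussianInt ⧸ I)] (hfield : IsField (GaussianInt ⧸ I))
    (q : ℕ) (hq : Fintype.card (GaussianInt ⧸ I) = q) (hodd : Odd q) :
    (pslMap (Ideal.Quotient.mk I)).ker.index = q * (q ^ 2 - 1) / 2 := by
  letI : Field (GaussianInt ⧸ I) := hfield.toField
  have hsurj := pslMap_surjective (Ideal.Quotient.mk I) Ideal.Quotient.mk_surjective
  rw [Subgroup.index_ker, MonoidHom.range_eq_top.mpr hsurj, Subgroup.card_top,
    card_PSL2 _ (hq ▸ hodd), hq]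
end

section
/- Let p be a prime element of the Gaussian integers ℤ[i] whose norm is greater than 5. Then there do not exist a, b, c, d, z ∈ ℤ[i] such that (ap + 1)(dp + 1) − bcp² = 1 and 2bp = (dp + 1)(1 + i + 2z). -/
open Matrix

set_option synthInstance.maxHeartbeats 1000000 in
lemma aux1 : Prime (1 + Zsqrtd.sqrtd : GaussianInt) := by
  rw [← irreducible_iff_prime]
  have hn : Zsqrtd.norm (1 + Zsqrtd.sqrtd : GaussianInt) = 2 := by simp [Zsqrtd.norm]
  constructor
  · intro h
    have := (Zsqrtd.norm_eq_one_iff' (by norm_num) _).2 h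
    omega
  · intro x y hxy
    have h2 : x.norm * y.norm = 2 := by rw [← Zsqrtd.norm_mul, ← hxy, hn]
    have hx := GaussianInt.norm_nonneg x
    have hy := GaussianInt.norm_nonneg y
    have hd : x.norm ∣ 2 := ⟨y.norm, h2.symm⟩
    have hle := Int.le_of_dvd two_pos hd
    interval_cases h : x.norm
    · omega
    · exact Or.inl ((Zsqrtd.norm_eq_one_iff' (by norm_num) _).1 h)
    · right; apply (Zsqrtd.norm_eq_one_iff' (by norm_num) _).1; nlinarith

/-- Let `p` be a prime Gaussian integer of norm greater than `5`. Then there are no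
Gaussian integers `a, b, c, d, z` with `(ap + 1)(dp + 1) - bcp² = 1` and
`2bp = (dp + 1)(1 + i + 2z)`. -/
theorem no_edge_between_opposite_cusps (p : GaussianInt) (hp : Prime p)
    (hnorm : 5 < p.norm) :
    ¬ ∃ a b c d z : GaussianInt,
        (a * p + 1) * (d * p + 1) - b * c * p ^ 2 = 1 ∧
        2 * b * p = (d * p + 1) * (1 + Zsqrtd.sqrtd + 2 * z) := by
  rintro ⟨a, b, c, d, z, h1, h2⟩
  obtain ⟨u, hu⟩ : ∃ u : GaussianInt, u = d * p + 1 := ⟨_, rfl⟩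
  rw [← hu] at h1 h2
  have h2n : (2:GaussianInt).norm = 4 := by simp [Zsqrtd.norm]
  -- u divides 2
  have hu2 : u ∣ 2 := ⟨2 * (a * p + 1) - (1 + Zsqrtd.sqrtd + 2 * z) * (c * p), by
    linear_combination -2 * h1 - c * p * h2⟩
  have hnu : u.norm ∣ 4 := by
    obtain ⟨w, hw⟩ := hu2
    exact ⟨w.norm, by rw [← h2n, hw, Zsqrtd.norm_mul]⟩
  have hu0 : u ≠ 0 := by
    intro h0; rw [h0] at hu2; exact two_ne_zero (zero_dvd_iff.mp hu2)
  have hnupos : 0 < u.norm := GaussianInt.norm_pos.2 hu0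
  have hnule : u.norm ≤ 4 := Int.le_of_dvd (by norm_num) hnu
  have hnp0 : (0:ℤ) < p.norm := by linarith
  have htn : Zsqrtd.norm (1 + Zsqrtd.sqrtd : GaussianInt) = 2 := by simp [Zsqrtd.norm]
  interval_cases hcase : u.norm
  · -- norm 1
    have hdvd : u * (1 + Zsqrtd.sqrtd) = 2 * (b * p - u * z) := by linear_combination -h2
    have h2' : (2:ℤ) = 4 * (b * p - u * z).norm := by
      have := congrArg Zsqrtd.norm hdvd
      rwa [Zsqrtd.norm_mul, Zsqrtd.norm_mul, hcase, one_mul, htn, h2n] at this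
    have := GaussianInt.norm_nonneg (b * p - u * z)
    omega
  · -- norm 2
    have hre : u.re * u.re + u.im * u.im = 2 := by
      have : u.norm = 2 := hcase
      simpa [Zsqrtd.norm] using this
    have hform : (u - 1).norm = 3 - 2 * u.re := by
      simp only [Zsqrtd.norm, Zsqrtd.re_sub, Zsqrtd.im_sub, Zsqrtd.re_one, Zsqrtd.im_one]
      ring_nf
      nlinarith [hre]
    have hsmall : (u - 1).norm ≤ 5 := by nlinarith [sq_nonneg (u.re + 1), sq_nonneg u.im]
    have hdp : u - 1 = d * p := by rw [hu]; ring
    rcases eq_or_ne d 0 with rfl | hd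
    · rw [zero_mul, zero_add] at hu
      rw [hu] at hcase
      simp [Zsqrtd.norm] at hcase
    · have hdn : 1 ≤ d.norm := GaussianInt.norm_pos.2 hd
      have heq : (u - 1).norm = d.norm * p.norm := by rw [hdp, Zsqrtd.norm_mul]
      nlinarith
  · omega
  · -- norm 4
    obtain ⟨w, hw⟩ := hu2
    have hwnorm : w.norm = 1 := by
      have := congrArg Zsqrtd.norm hw
      rw [Zsqrtd.norm_mul, h2n, hcase] at this
      linarith
    have hwu : IsUnit w := (Zsqrtd.norm_eq_one_iff' (by norm_num) _).1 hwnorm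
    obtain ⟨wi, hwi⟩ := hwu.exists_right_inv
    have h2u : (2:GaussianInt) ∣ u := ⟨wi, by
      calc u = u * (w * wi) := by rw [hwi, mul_one]
        _ = 2 * wi := by rw [← mul_assoc, ← hw]⟩
    obtain ⟨v, hv⟩ := h2u
    have ht2 : (1 + Zsqrtd.sqrtd : GaussianInt) ∣ 2 :=
      ⟨1 - Zsqrtd.sqrtd, by ext <;> simp [Zsqrtd.re_mul, Zsqrtd.im_mul]⟩
    have htbp : (1 + Zsqrtd.sqrtd : GaussianInt) ∣ b * p := by
      have hbp : b * p = v * (1 + Zsqrtd.sqrtd) + 2 * (v * z) := by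
        have h2' : 2 * (b * p) = 2 * (v * (1 + Zsqrtd.sqrtd) + 2 * (v * z)) := by
          linear_combination h2 + (1 + Zsqrtd.sqrtd + 2 * z) * hv
        exact mul_left_cancel₀ (two_ne_zero' GaussianInt) h2'
      rw [hbp]
      exact dvd_add (Dvd.intro_left v rfl) (ht2.mul_right _)
    have htnotp : ¬ (1 + Zsqrtd.sqrtd : GaussianInt) ∣ p := by
      intro hdvd
      obtain ⟨s, hs⟩ := hdvd
      rcases hp.irreducible.isUnit_or_isUnit hs with h | h
      · have := (Zsqrtd.norm_eq_one_iff' (by norm_num) _).2 h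
        omega
      · have hs1 := (Zsqrtd.norm_eq_one_iff' (by norm_num) s).2 h
        have : p.norm = 2 := by rw [hs, Zsqrtd.norm_mul, hs1, mul_one, htn]
        omega
    have htb : (1 + Zsqrtd.sqrtd : GaussianInt) ∣ b := (aux1.dvd_mul.mp htbp).resolve_right htnotp
    have h2bc : (2:GaussianInt) ∣ b * c * p ^ 2 + 1 := by
      refine ⟨(a * p + 1) * v, ?_⟩
      have heq : b * c * p ^ 2 + 1 = (a * p + 1) * u := by linear_combination -h1
      rw [heq, hv]; ring
    have htone : (1 + Zsqrtd.sqrtd : GaussianInt) ∣ 1 := by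
      have ha : (1 + Zsqrtd.sqrtd : GaussianInt) ∣ b * c * p ^ 2 + 1 := ht2.trans h2bc
      have hb : (1 + Zsqrtd.sqrtd : GaussianInt) ∣ b * c * p ^ 2 := (htb.mul_right _).mul_right _
      simpa using dvd_sub ha hb
    have := (Zsqrtd.norm_eq_one_iff' (by norm_num) _).2 (isUnit_of_dvd_one htone)
    omega
end

section
/- Let I be a prime ideal of the Gaussian integers ℤ[i] whose quotient ring F = ℤ[i]/I is a finite field of odd cardinality, and let ī ∈ F denote the image of i ∈ ℤ[i]. Then the image, under the induced homomorphism PSL₂(ℤ[i]) → PSL₂(F), of the subgroup of PSL₂(ℤ[i]) consisting of the classes of all matrices [[u, x],[0, u⁻¹]] with x ∈ ℤ[i] and u ∈ {1, i}, equals the subgroup of PSL₂(F) consisting of the classes of all upper triangular matrices [[w, y],[0, w⁻¹]] with w, y ∈ F and w⁴ = 1. -/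
open Matrix MatrixGroups

/-- The natural projection `SL₂(R) → PSL₂(R)`, sending a matrix to its class modulo
the center. -/
def pslmk {R : Type*} [CommRing R] :
    Matrix.SpecialLinearGroup (Fin 2) R →* Matrix.ProjectiveSpecialLinearGroup (Fin 2) R :=
  QuotientGroup.mk' (Subgroup.center (Matrix.SpecialLinearGroup (Fin 2) R))

lemma detneg1 {R : Type*} [CommRing R] : Matrix.det (-1 : Matrix (Fin 2) (Fin 2) R) = 1 := by
  simp [Matrix.det_fin_two]

lemma neg_one_mem_center (R : Type*) [CommRing R] :
    (⟨-1, detneg1⟩ : Matrix.SpecialLinearGroup (Fin 2) R) ∈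
      Subgroup.center (Matrix.SpecialLinearGroup (Fin 2) R) := by
  refine Matrix.SpecialLinearGroup.mem_center_iff.mpr ⟨-1, by norm_num, ?_⟩
  simp [Matrix.scalar]
  ext i j
  by_cases hij : i = j <;> simp [Matrix.diagonal, Matrix.one_apply, hij]

lemma pslmk_neg {R : Type*} [CommRing R] (A B : Matrix.SpecialLinearGroup (Fin 2) R)
    (h : (B : Matrix (Fin 2) (Fin 2) R) = -(A : Matrix (Fin 2) (Fin 2) R)) :
    pslmk A = pslmk B := by
  rw [pslmk, QuotientGroup.mk'_eq_mk']
  refine ⟨⟨-1, detneg1⟩, neg_one_mem_center R, ?_⟩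
  apply Subtype.ext
  show (A : Matrix (Fin 2) (Fin 2) R) * (-1) = B
  rw [h, Matrix.mul_neg, Matrix.mul_one]

lemma map_fin_two {R S : Type*} [CommRing R] [CommRing S] (f : R →+* S) (a b c d : R) :
    (!![a,b;c,d]).map f = !![f a, f b; f c, f d] := by
  ext i j; fin_cases i <;> fin_cases j <;> simp

lemma slmap_coe {R S : Type*} [CommRing R] [CommRing S] (f : R →+* S)
    (A : Matrix.SpecialLinearGroup (Fin 2) R) :
    ((Matrix.SpecialLinearGroup.map f A) : Matrix (Fin 2) (Fin 2) S)
      = (A : Matrix (Fin 2) (Fin 2) R).map f := rfl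

lemma pslMap_pslmk {R S : Type*} [CommRing R] [CommRing S] (f : R →+* S)
    (A : Matrix.SpecialLinearGroup (Fin 2) R) :
    pslMap f (pslmk A) = pslmk (Matrix.SpecialLinearGroup.map f A) := rfl

set_option maxHeartbeats 1600000 in
/-- Let `I` be a prime ideal of `ℤ[i]` whose quotient `F = ℤ[i]/I` is a finite field of
odd cardinality. The image under the induced map `PSL₂(ℤ[i]) → PSL₂(F)` of the subgroup
of classes of matrices `[[u, x], [0, u⁻¹]]` with `u ∈ {1, i}` is the subgroup of classes
of upper triangular matrices `[[w, y], [0, w⁻¹]]` with `w⁴ = 1`. -/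
theorem image_stab_infinity (I : Ideal GaussianInt) (hI : I.IsPrime)
    [Fintype (GaussianInt ⧸ I)] (hfield : IsField (GaussianInt ⧸ I))
    (hodd : Odd (Fintype.card (GaussianInt ⧸ I)))
    (H₁ : Subgroup (Matrix.ProjectiveSpecialLinearGroup (Fin 2) GaussianInt))
    (hH₁ : (H₁ : Set (Matrix.ProjectiveSpecialLinearGroup (Fin 2) GaussianInt)) =
      {g | ∃ u x u' : GaussianInt, (u = 1 ∨ u = Zsqrtd.sqrtd) ∧
        ∃ h : Matrix.det !![u, x; 0, u'] = 1, g = pslmk ⟨!![u, x; 0, u'], h⟩})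
    (H₂ : Subgroup (Matrix.ProjectiveSpecialLinearGroup (Fin 2) (GaussianInt ⧸ I)))
    (hH₂ : (H₂ : Set (Matrix.ProjectiveSpecialLinearGroup (Fin 2) (GaussianInt ⧸ I))) =
      {g | ∃ w y w' : GaussianInt ⧸ I, w ^ 4 = 1 ∧
        ∃ h : Matrix.det !![w, y; 0, w'] = 1, g = pslmk ⟨!![w, y; 0, w'], h⟩}) :
    Subgroup.map (pslMap (Ideal.Quotient.mk I)) H₁ = H₂ := by
  letI : Field (GaussianInt ⧸ I) := hfield.toField
  set f := Ideal.Quotient.mk I with hf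
  have hi2 : (Zsqrtd.sqrtd : GaussianInt) ^ 2 = -1 := by
    ext <;> simp [pow_two, Zsqrtd.re_mul, Zsqrtd.im_mul]
  have hibar : (f Zsqrtd.sqrtd) ^ 2 = -1 := by
    rw [← map_pow, hi2]; simp
  have hine : f Zsqrtd.sqrtd ≠ 0 := by
    intro h0
    rw [h0] at hibar
    simp at hibar
  ext g
  simp only [Subgroup.mem_map]
  constructor
  · rintro ⟨a, haH, rfl⟩
    have ha : a ∈ (H₁ : Set _) := haH
    rw [hH₁] at ha
    obtain ⟨u, x, u', hu, h, rfl⟩ := ha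
    have huu' : u * u' = 1 := by simpa [Matrix.det_fin_two_of] using h
    rw [← SetLike.mem_coe, hH₂]
    have hdet : Matrix.det !![f u, f x; 0, f u'] = 1 := by
      rw [Matrix.det_fin_two_of]
      simp [← _root_.map_mul, huu']
    refine ⟨f u, f x, f u', ?_, hdet, ?_⟩
    · rcases hu with rfl | rfl
      · simp
      · calc (f Zsqrtd.sqrtd) ^ 4 = ((f Zsqrtd.sqrtd) ^ 2) ^ 2 := by ring
          _ = 1 := by rw [hibar]; ring
    · refine (pslMap_pslmk f _).trans ?_
      refine congrArg pslmk (Subtype.ext ?_)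
      erw [slmap_coe]; rw [map_fin_two]
      simp
  · intro hg
    have hg' : g ∈ (H₂ : Set _) := hg
    rw [hH₂] at hg'
    obtain ⟨w, y, w', hw4, h, rfl⟩ := hg'
    have hww' : w * w' = 1 := by simpa [Matrix.det_fin_two_of] using h
    obtain ⟨x, hx⟩ := Ideal.Quotient.mk_surjective y
    obtain ⟨x', hx'⟩ := Ideal.Quotient.mk_surjective (-y)
    have hsplit : (w ^ 2 - 1) * (w ^ 2 + 1) = 0 := by linear_combination hw4
    have d1 : Matrix.det !![(1 : GaussianInt), x; 0, 1] = 1 := by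
      simp [Matrix.det_fin_two_of]
    have d1' : Matrix.det !![(1 : GaussianInt), x'; 0, 1] = 1 := by
      simp [Matrix.det_fin_two_of]
    have d2 : Matrix.det !![(Zsqrtd.sqrtd : GaussianInt), x; 0, -Zsqrtd.sqrtd] = 1 := by
      rw [Matrix.det_fin_two_of]
      linear_combination -hi2
    have d2' : Matrix.det !![(Zsqrtd.sqrtd : GaussianInt), x'; 0, -Zsqrtd.sqrtd] = 1 := by
      rw [Matrix.det_fin_two_of]
      linear_combination -hi2
    have mem1 : pslmk ⟨!![(1 : GaussianInt), x; 0, 1], d1⟩ ∈ H₁ := by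
      rw [← SetLike.mem_coe, hH₁]; exact ⟨1, x, 1, Or.inl rfl, d1, rfl⟩
    have mem1' : pslmk ⟨!![(1 : GaussianInt), x'; 0, 1], d1'⟩ ∈ H₁ := by
      rw [← SetLike.mem_coe, hH₁]; exact ⟨1, x', 1, Or.inl rfl, d1', rfl⟩
    have mem2 : pslmk ⟨!![(Zsqrtd.sqrtd : GaussianInt), x; 0, -Zsqrtd.sqrtd], d2⟩ ∈ H₁ := by
      rw [← SetLike.mem_coe, hH₁]; exact ⟨Zsqrtd.sqrtd, x, -Zsqrtd.sqrtd, Or.inr rfl, d2, rfl⟩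
    have mem2' : pslmk ⟨!![(Zsqrtd.sqrtd : GaussianInt), x'; 0, -Zsqrtd.sqrtd], d2'⟩ ∈ H₁ := by
      rw [← SetLike.mem_coe, hH₁]; exact ⟨Zsqrtd.sqrtd, x', -Zsqrtd.sqrtd, Or.inr rfl, d2', rfl⟩
    rcases mul_eq_zero.mp hsplit with h1 | h2
    · have hsq : w ^ 2 = 1 := by linear_combination h1
      have : (w - 1) * (w + 1) = 0 := by linear_combination hsq
      rcases mul_eq_zero.mp this with hw | hw
      · have hw1 : w = 1 := by linear_combination hw
        have hw'1 : w' = 1 := by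
          have := hww'; rw [hw1, one_mul] at this; exact this
        refine ⟨_, mem1, ?_⟩
        refine (pslMap_pslmk f _).trans ?_
        refine congrArg pslmk (Subtype.ext ?_)
        erw [slmap_coe]; rw [map_fin_two]
        simp [hf, hx, hw1, hw'1]
      · have hw1 : w = -1 := by linear_combination hw
        have hw'1 : w' = -1 := by
          have := hww'; rw [hw1] at this; linear_combination -this
        refine ⟨_, mem1', ?_⟩
        refine (pslMap_pslmk f _).trans ?_
        apply pslmk_neg
        erw [slmap_coe]; rw [map_fin_two]
        ext i j
        fin_cases i <;> fin_cases j <;> simp [hf, hx', hw1, hw'1]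
    · have hsq : w ^ 2 = -1 := by linear_combination h2
      have : (w - f Zsqrtd.sqrtd) * (w + f Zsqrtd.sqrtd) = 0 := by
        linear_combination hsq - hibar
      rcases mul_eq_zero.mp this with hw | hw
      · have hw1 : w = f Zsqrtd.sqrtd := by linear_combination hw
        have hw'1 : w' = -f Zsqrtd.sqrtd := by
          apply mul_left_cancel₀ hine
          rw [← hw1, hww', hw1]
          linear_combination hibar
        refine ⟨_, mem2, ?_⟩
        refine (pslMap_pslmk f _).trans ?_
        refine congrArg pslmk (Subtype.ext ?_)
        erw [slmap_coe]; rw [map_fin_two]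
        simp [hf, hx, hw1, hw'1]
      · have hw1 : w = -f Zsqrtd.sqrtd := by linear_combination hw
        have hw'1 : w' = f Zsqrtd.sqrtd := by
          apply mul_left_cancel₀ (neg_ne_zero.mpr hine)
          rw [← hw1, hww', hw1]
          linear_combination hibar
        refine ⟨_, mem2', ?_⟩
        refine (pslMap_pslmk f _).trans ?_
        apply pslmk_neg
        erw [slmap_coe]; rw [map_fin_two]
        ext i j
        fin_cases i <;> fin_cases j <;> simp [hf, hx', hw1, hw'1]
end
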